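/- Let s_1, …, s_m be nondegenerate segments in [a,b] with pairwise disjoint interiors, let r ≥ m, and let u_1, …, u_r be a basis of ℙ_{r−1}. Then the m×r matrix N = (μ_{s_i}(u_j))_{1≤i≤m, 1≤j≤r} has rank m, i.e., its rows are linearly independent. -/

import Mathlib

open Real Set Polynomial

/-- Segmental average: `μ_[a,b](f) = (b-a)⁻¹ ∫_a^b f`. -/
noncomputable def segAvg (a b : ℝ) (f : ℝ → ℝ) : ℝ := (b - a)⁻¹ * ∫ x in a..b, f x

/-- A polynomial of degree `< m` whose integral vanishes on `m` segments with
pairwise disjoint interiors is zero. -/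
lemma poly_eq_zero_aux {m : ℕ} (lo hi : Fin m → ℝ) (hseg : ∀ i, lo i < hi i)
    (hdisj : ∀ i j, i ≠ j → Set.Ioo (lo i) (hi i) ∩ Set.Ioo (lo j) (hi j) = ∅)
    (p : Polynomial ℝ) (hdeg : p ∈ Polynomial.degreeLT ℝ m)
    (hint : ∀ i, (∫ x in (lo i)..(hi i), p.eval x) = 0) : p = 0 := by
  by_contra hp
  have hroot : ∀ i : Fin m, ∃ z ∈ Set.Ioo (lo i) (hi i), p.eval z = 0 := by
    intro i
    have hc : Continuous fun x : ℝ => p.eval x := p.continuous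
    have hder : ∀ t : ℝ, HasDerivAt (fun t => ∫ x in (lo i)..t, p.eval x) (p.eval t) t :=
      fun t => (hc.integral_hasStrictDerivAt (lo i) t).hasDerivAt
    obtain ⟨z, hz, hz0⟩ := exists_deriv_eq_zero (f := fun t => ∫ x in (lo i)..t, p.eval x)
      (hseg i)
      (fun t _ => (hder t).continuousAt.continuousWithinAt)
      (by simp [intervalIntegral.integral_same, hint i])
    exact ⟨z, hz, by rw [← (hder z).deriv]; exact hz0⟩
  choose z hz hz0 using hroot
  have hinj : Function.Injective z := by
    intro i j hij
    by_contra hne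
    have : z i ∈ Set.Ioo (lo i) (hi i) ∩ Set.Ioo (lo j) (hi j) := ⟨hz i, hij ▸ hz j⟩
    rw [hdisj i j hne] at this
    exact this
  have hdm : p.natDegree < Fintype.card (Fin m) := by
    rw [Fintype.card_fin]
    exact (Polynomial.natDegree_lt_iff_degree_lt hp).2 (Polynomial.mem_degreeLT.1 hdeg)
  exact hp (Polynomial.eq_zero_of_natDegree_lt_card_of_eval_eq_zero p hinj hz0 hdm)

/-- Full row rank of the interpolation matrix: for `m ≤ r` segments with pairwise
disjoint interiors and a basis `u_1, …, u_r` of `ℙ_{r-1}`, the `m × r` matrix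
`(μ_{s_i}(u_j))` has rank `m`. -/
theorem stmt_15 (a b : ℝ) (m r : ℕ) (hmr : m ≤ r)
    (lo hi : Fin m → ℝ)
    (hseg : ∀ i, lo i < hi i)
    (hsub : ∀ i, Set.Icc (lo i) (hi i) ⊆ Set.Icc a b)
    (hdisj : ∀ i j, i ≠ j → Set.Ioo (lo i) (hi i) ∩ Set.Ioo (lo j) (hi j) = ∅)
    (u : Fin r → Polynomial ℝ)
    (hu : ∀ j, u j ∈ Polynomial.degreeLT ℝ r)
    (huli : LinearIndependent ℝ u) :
    (Matrix.of fun (i : Fin m) (j : Fin r) =>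
      segAvg (lo i) (hi i) fun x => (u j).eval x).rank = m := by
  classical
  set N : Matrix (Fin m) (Fin r) ℝ :=
    Matrix.of (fun (i : Fin m) (j : Fin r) =>
      segAvg (lo i) (hi i) fun x => (u j).eval x) with hNdef
  have hlen : ∀ i, (hi i - lo i)⁻¹ ≠ 0 := fun i =>
    inv_ne_zero (sub_ne_zero.2 (hseg i).ne')
  have hInt : ∀ (p : Polynomial ℝ) (i : Fin m),
      IntervalIntegrable (fun x => p.eval x) MeasureTheory.volume (lo i) (hi i) :=
    fun p i => p.continuous.intervalIntegrable _ _
  -- key: the rows of N are linearly independent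
  have key : ∀ c : Fin m → ℝ, Matrix.vecMul c N = 0 → c = 0 := by
    intro c hc
    -- the linear functional p ↦ ∑ i, c i * μ_{s_i}(p)
    set L : Polynomial ℝ →ₗ[ℝ] ℝ :=
      { toFun := fun p => ∑ i, c i * segAvg (lo i) (hi i) fun x => p.eval x
        map_add' := by
          intro p q
          have h : ∀ i : Fin m, segAvg (lo i) (hi i) (fun x => (p + q).eval x)
              = segAvg (lo i) (hi i) (fun x => p.eval x)
                + segAvg (lo i) (hi i) (fun x => q.eval x) := by
            intro i
            simp only [segAvg, Polynomial.eval_add]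
            rw [intervalIntegral.integral_add (hInt p i) (hInt q i)]
            ring
          simp only [h, mul_add, Finset.sum_add_distrib]
        map_smul' := by
          intro t p
          have h : ∀ i : Fin m, segAvg (lo i) (hi i) (fun x => (t • p).eval x)
              = t * segAvg (lo i) (hi i) (fun x => p.eval x) := by
            intro i
            simp only [segAvg, Polynomial.eval_smul, smul_eq_mul]
            rw [intervalIntegral.integral_const_mul]
            ring
          simp only [h, RingHom.id_apply, smul_eq_mul, Finset.mul_sum]
          exact Finset.sum_congr rfl fun i _ => by ring } with hLdef
    have hLu : ∀ j, L (u j) = 0 := by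
      intro j
      have h := congr_fun hc j
      simpa [hLdef, hNdef, Matrix.vecMul, dotProduct] using h
    -- the span of u is all of degreeLT r
    have hspan : Polynomial.degreeLT ℝ r = Submodule.span ℝ (Set.range u) := by
      have hle : Submodule.span ℝ (Set.range u) ≤ Polynomial.degreeLT ℝ r :=
        Submodule.span_le.2 (by rintro _ ⟨j, rfl⟩; exact hu j)
      have hfin : FiniteDimensional ℝ (Polynomial.degreeLT ℝ r) :=
        Module.Finite.equiv (Polynomial.degreeLTEquiv ℝ r).symm
      have h1 : Module.finrank ℝ (Polynomial.degreeLT ℝ r) = r := by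
        rw [(Polynomial.degreeLTEquiv ℝ r).finrank_eq]
        simp
      have h2 : Module.finrank ℝ (Submodule.span ℝ (Set.range u)) = r := by
        rw [finrank_span_eq_card huli, Fintype.card_fin]
      exact (Submodule.eq_of_le_of_finrank_le hle (by rw [h1, h2])).symm
    have hL0 : ∀ p ∈ Polynomial.degreeLT ℝ r, L p = 0 := by
      intro p hp
      rw [hspan] at hp
      have hker : Submodule.span ℝ (Set.range u) ≤ LinearMap.ker L :=
        Submodule.span_le.2 (by rintro _ ⟨j, rfl⟩; exact hLu j)
      exact hker hp
    -- the square matrix of monomial averages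
    set M : Matrix (Fin m) (Fin m) ℝ :=
      Matrix.of (fun (i j : Fin m) => segAvg (lo i) (hi i) fun x => x ^ (j : ℕ)) with hMdef
    have hMker : ∀ x : Fin m → ℝ, M.mulVec x = 0 → x = 0 := by
      intro x hx
      set p : Polynomial ℝ := ∑ j : Fin m, Polynomial.C (x j) * Polynomial.X ^ (j : ℕ)
        with hpdef
      have hpdeg : p ∈ Polynomial.degreeLT ℝ m := by
        apply Submodule.sum_mem
        intro j _
        rw [Polynomial.mem_degreeLT]
        exact lt_of_le_of_lt (Polynomial.degree_C_mul_X_pow_le _ _)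
          (WithBot.coe_lt_coe.2 j.isLt)
      have hpint : ∀ i, (∫ t in (lo i)..(hi i), p.eval t) = 0 := by
        intro i
        have heq : M.mulVec x i = segAvg (lo i) (hi i) fun t => p.eval t := by
          have hev : (fun t : ℝ => p.eval t) = fun t : ℝ => ∑ j : Fin m, x j * t ^ (j : ℕ) := by
            funext t
            simp [hpdef, Polynomial.eval_finset_sum]
          simp only [Matrix.mulVec, dotProduct, hMdef, Matrix.of_apply, segAvg, hev]
          rw [intervalIntegral.integral_finset_sum (f := fun j (t : ℝ) => x j * t ^ (j : ℕ))
            (fun j _ => ((continuous_const.mul (continuous_pow _)).intervalIntegrable _ _))]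
          simp only [intervalIntegral.integral_const_mul, Finset.mul_sum]
          exact Finset.sum_congr rfl fun j _ => by ring
        have h0 : segAvg (lo i) (hi i) (fun t => p.eval t) = 0 := by
          rw [← heq, hx]; rfl
        rw [segAvg] at h0
        rcases mul_eq_zero.1 h0 with h | h
        · exact absurd h (hlen i)
        · exact h
      have hp0 : p = 0 := poly_eq_zero_aux lo hi hseg hdisj p hpdeg hpint
      funext j
      have hcoeff : p.coeff (j : ℕ) = x j := by
        rw [hpdef, Polynomial.finset_sum_coeff]
        simp only [Polynomial.coeff_C_mul, Polynomial.coeff_X_pow]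
        rw [Finset.sum_eq_single j]
        · simp
        · intro b _ hb
          have h1 : ¬((b : ℕ) = (j : ℕ)) := fun h => hb (Fin.val_injective h)
          have h2 : ¬((j : ℕ) = (b : ℕ)) := fun h => hb (Fin.val_injective h.symm)
          simp [h1, h2]
        · simp
      rw [← hcoeff, hp0]
      simp
    have hMinj : Function.Injective M.mulVec := by
      intro x y hxy
      have : M.mulVec (x - y) = 0 := by
        rw [Matrix.mulVec_sub, hxy, sub_self]
      have := hMker _ this
      exact sub_eq_zero.1 this
    have hMunit : IsUnit M := Matrix.mulVec_injective_iff_isUnit.1 hMinj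
    have hvinj : Function.Injective M.vecMul := Matrix.vecMul_injective_iff_isUnit.2 hMunit
    have hcM : Matrix.vecMul c M = 0 := by
      funext j
      have hXj : (Polynomial.X : Polynomial ℝ) ^ (j : ℕ) ∈ Polynomial.degreeLT ℝ r := by
        rw [Polynomial.mem_degreeLT, Polynomial.degree_X_pow]
        exact_mod_cast lt_of_lt_of_le j.isLt hmr
      have hval : (Matrix.vecMul c M) j = L ((Polynomial.X : Polynomial ℝ) ^ (j : ℕ)) := by
        simp [hLdef, hMdef, Matrix.vecMul, dotProduct]
      rw [hval, hL0 _ hXj]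
      rfl
    have : Matrix.vecMul c M = Matrix.vecMul (0 : Fin m → ℝ) M := by
      rw [hcM, Matrix.zero_vecMul]
    exact hvinj this
  -- from trivial left kernel to full rank
  have hkerT : LinearMap.ker (N.transpose.mulVecLin) = ⊥ := by
    rw [LinearMap.ker_eq_bot']
    intro c hc
    apply key c
    simpa using hc
  rw [← Matrix.rank_transpose N, Matrix.rank,
    LinearMap.finrank_range_of_inj (LinearMap.ker_eq_bot.1 hkerT)]
  simp
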